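/- Fix an integer k ≥ 1 and let ū ∈ ℚ⟦z⟧ be the unique formal power series with constant coefficient 1 satisfying 1 − ū + z ū^{k+1} = 0. Then for every integer m ≥ 1, the coefficient of z^m in Σ_{h=1}^{k} ū^h equals (k/(m+1)) · C((k+1)m, m). -/

import Mathlib

noncomputable section

private lemma choose_sub_one_q (n m : ℕ) (hm : 1 ≤ m) :
    ((n : ℚ) + 1 - m) * (n.choose (m - 1) : ℚ) = (m : ℚ) * (n.choose m : ℚ) := by
  obtain ⟨m', rfl⟩ : ∃ m', m = m' + 1 := ⟨m - 1, by omega⟩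
  have h1 := Nat.add_one_mul_choose_eq n m'
  have h2 := Nat.choose_succ_succ' n m'
  have h1' : ((n : ℚ) + 1) * (n.choose m' : ℚ)
      = ((n.choose m' : ℚ) + (n.choose (m' + 1) : ℚ)) * ((m' : ℚ) + 1) := by
    rw [h2] at h1
    exact_mod_cast congrArg (Nat.cast : ℕ → ℚ) h1
  simp only [Nat.add_sub_cancel]
  push_cast
  nlinarith [h1']

private lemma choose_succ_ratio_q (n m : ℕ) (hm : 1 ≤ m) :
    ((n : ℚ) + 1 - m) * ((n + 1).choose m : ℚ) = ((n : ℚ) + 1) * (n.choose m : ℚ) := by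
  obtain ⟨m', rfl⟩ : ∃ m', m = m' + 1 := ⟨m - 1, by omega⟩
  have hp : (((n + 1).choose (m' + 1) : ℕ) : ℚ)
      = (n.choose m' : ℚ) + (n.choose (m' + 1) : ℚ) := by
    exact_mod_cast congrArg (Nat.cast : ℕ → ℚ) (Nat.choose_succ_succ' n m')
  have h := choose_sub_one_q n (m' + 1) (by omega)
  simp only [Nat.add_sub_cancel] at h
  push_cast at h ⊢
  rw [hp]
  nlinarith [h]

private lemma keyB (k m' r' : ℕ) :
    ((r' : ℚ) / (((k + 1) * (m' + 1) + r' : ℕ) : ℚ))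
        * ((((k + 1) * (m' + 1) + r').choose (m' + 1) : ℕ) : ℚ)
      + (((r' + (k + 1) : ℕ) : ℚ) / (((k + 1) * (m' + 1) + r' : ℕ) : ℚ))
        * ((((k + 1) * (m' + 1) + r').choose m' : ℕ) : ℚ)
      = (((r' + 1 : ℕ) : ℚ) / (((k + 1) * (m' + 1) + (r' + 1) : ℕ) : ℚ))
        * ((((k + 1) * (m' + 1) + (r' + 1)).choose (m' + 1) : ℕ) : ℚ) := by
  set n : ℕ := (k + 1) * (m' + 1) + r' with hn
  have hn1 : (k + 1) * (m' + 1) + (r' + 1) = n + 1 := by omega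
  rw [hn1]
  have hnq : (n : ℚ) = ((k : ℚ) + 1) * ((m' : ℚ) + 1) + (r' : ℚ) := by
    rw [hn]; push_cast; ring
  have hge : m' + 1 ≤ n := by
    have h1 : 1 * (m' + 1) ≤ (k + 1) * (m' + 1) := Nat.mul_le_mul_right _ (by omega)
    omega
  have hgeq : (m' : ℚ) + 1 ≤ (n : ℚ) := by exact_mod_cast hge
  have hd' : ((n : ℚ) - (m' : ℚ)) ≠ 0 := by
    intro h; linarith
  have hn0 : (n : ℚ) ≠ 0 := by
    have : (0 : ℚ) < n := by linarith
    linarith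
  have hn10 : (n : ℚ) + 1 ≠ 0 := by
    have : (0 : ℚ) < n := by linarith
    linarith
  set X : ℚ := (n.choose (m' + 1) : ℚ) with hX
  set Y : ℚ := (n.choose m' : ℚ) with hY
  set Z : ℚ := ((n + 1).choose (m' + 1) : ℚ) with hZ
  have hsub := choose_sub_one_q n (m' + 1) (by omega)
  have hsucc := choose_succ_ratio_q n (m' + 1) (by omega)
  simp only [Nat.add_sub_cancel] at hsub
  push_cast at hsub hsucc ⊢
  have h1 : ((n : ℚ) - (m' : ℚ)) * Y = ((m' : ℚ) + 1) * X := by linear_combination hsub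
  have h2 : ((n : ℚ) - (m' : ℚ)) * Z = ((n : ℚ) + 1) * X := by linear_combination hsucc
  have key : ((↑r' * X + (↑r' + ↑k + 1) * Y) * (↑n + 1)) * ((n : ℚ) - ↑m')
      = (((↑r' + 1) * Z) * ↑n) * ((n : ℚ) - ↑m') := by
    linear_combination ((n : ℚ) + 1) * (↑r' + ↑k + 1) * h1 - (↑n * (↑r' + 1)) * h2
      - ((↑n + 1) * X) * hnq
  have key2 : (↑r' * X + (↑r' + ↑k + 1) * Y) * ((n : ℚ) + 1) = ((↑r' + 1) * Z) * ↑n :=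
    mul_right_cancel₀ hd' key
  field_simp
  linear_combination key2

/-- Coefficients of powers of the Fuss–Catalan series. -/
private lemma coeff_ubar_pow (k : ℕ) (ubar : PowerSeries ℚ)
    (hu : ubar = 1 + PowerSeries.X * ubar ^ (k + 1)) :
    ∀ m r : ℕ, 1 ≤ r →
      PowerSeries.coeff m (ubar ^ r)
        = ((r : ℚ) / (((k + 1) * m + r : ℕ) : ℚ)) * ((((k + 1) * m + r).choose m : ℕ) : ℚ) := by
  have hstep : ∀ r : ℕ, ubar ^ (r + 1) = ubar ^ r + PowerSeries.X * ubar ^ (r + (k + 1)) := by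
    intro r
    calc ubar ^ (r + 1) = ubar ^ r * (1 + PowerSeries.X * ubar ^ (k + 1)) := by
          rw [← hu, pow_succ]
      _ = ubar ^ r + PowerSeries.X * ubar ^ (r + (k + 1)) := by rw [pow_add]; ring
  have h0 : PowerSeries.constantCoeff ubar = 1 := by
    have := congrArg (PowerSeries.constantCoeff) hu
    simpa using this
  intro m
  induction m using Nat.strong_induction_on with
  | _ m ih =>
    match m with
    | 0 =>
      intro r hr
      have hc : PowerSeries.coeff 0 (ubar ^ r) = 1 := by
        rw [PowerSeries.coeff_zero_eq_constantCoeff, map_pow, h0, one_pow]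
      rw [hc]
      have hr0 : ((r : ℚ)) ≠ 0 := by positivity
      simp [Nat.choose_zero_right, div_self hr0]
    | m' + 1 =>
      intro r
      induction r with
      | zero => omega
      | succ r' ihr =>
        intro _
        have hco : PowerSeries.coeff (m' + 1) (ubar ^ (r' + 1))
            = PowerSeries.coeff (m' + 1) (ubar ^ r')
              + PowerSeries.coeff m' (ubar ^ (r' + (k + 1))) := by
          rw [hstep r', map_add, PowerSeries.coeff_succ_X_mul]
        have h1 : PowerSeries.coeff (m' + 1) (ubar ^ r')
            = ((r' : ℚ) / (((k + 1) * (m' + 1) + r' : ℕ) : ℚ))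
                * ((((k + 1) * (m' + 1) + r').choose (m' + 1) : ℕ) : ℚ) := by
          rcases Nat.eq_zero_or_pos r' with h | h
          · subst h
            simp [pow_zero, PowerSeries.coeff_one]
          · exact ihr h
        have h2 : PowerSeries.coeff m' (ubar ^ (r' + (k + 1)))
            = (((r' + (k + 1) : ℕ) : ℚ) / (((k + 1) * m' + (r' + (k + 1)) : ℕ) : ℚ))
                * ((((k + 1) * m' + (r' + (k + 1))).choose m' : ℕ) : ℚ) :=
          ih m' (by omega) (r' + (k + 1)) (by omega)
        have hBA : (k + 1) * m' + (r' + (k + 1)) = (k + 1) * (m' + 1) + r' := by ring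
        rw [hBA] at h2
        rw [hco, h1, h2]
        exact keyB k m' r'

private def Tq (k m j : ℕ) : ℚ :=
  ((m : ℚ) * j ^ 2 + ((m : ℚ) * ((((k + 1) * m : ℕ) : ℚ) + 1) - (((k + 1) * m : ℕ) : ℚ)) * j
      - (((k + 1) * m : ℕ) : ℚ) * ((((k + 1) * m : ℕ) : ℚ) - (m : ℚ)))
    / ((m : ℚ) * ((m : ℚ) + 1) * ((((k + 1) * m : ℕ) : ℚ) + (j : ℚ)))
    * ((((k + 1) * m + j).choose m : ℕ) : ℚ)

private lemma keyC (k m i : ℕ) (hm : 1 ≤ m) :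
    (((1 + i : ℕ) : ℚ) / (((k + 1) * m + (1 + i) : ℕ) : ℚ))
        * ((((k + 1) * m + (1 + i)).choose m : ℕ) : ℚ)
      = Tq k m (i + 1) - Tq k m i := by
  obtain ⟨n, hn⟩ : ∃ n, n = (k + 1) * m + i := ⟨_, rfl⟩
  have hn1 : (k + 1) * m + (1 + i) = n + 1 := by rw [hn]; ring
  have hn2 : (k + 1) * m + (i + 1) = n + 1 := by rw [hn]; ring
  unfold Tq
  rw [hn1, hn2, ← hn]
  push_cast
  have hnq : (n : ℚ) = ((k : ℚ) + 1) * m + i := by rw [hn]; push_cast; ring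
  rw [hnq]
  set X : ℚ := (n.choose m : ℚ) with hX
  set Z : ℚ := ((n + 1).choose m : ℚ) with hZ
  have hCs := choose_succ_ratio_q n m hm
  rw [← hX, ← hZ, hnq] at hCs
  have hk0 : (0 : ℚ) ≤ (k : ℚ) := Nat.cast_nonneg k
  have hi0 : (0 : ℚ) ≤ (i : ℚ) := Nat.cast_nonneg i
  have hm1 : (1 : ℚ) ≤ (m : ℚ) := by exact_mod_cast hm
  have hq0 : ((k : ℚ) + 1) * m + i ≠ 0 := by nlinarith
  have hq1 : ((k : ℚ) + 1) * m + i + 1 ≠ 0 := by nlinarith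
  have hd : ((k : ℚ) + 1) * m + i + 1 - m ≠ 0 := by nlinarith
  have hm0 : (m : ℚ) ≠ 0 := by nlinarith
  have hm10 : (m : ℚ) + 1 ≠ 0 := by nlinarith
  have hD2 : (m : ℚ) * ((m : ℚ) + 1) * (((k : ℚ) + 1) * m + ((i : ℚ) + 1)) ≠ 0 := by
    apply mul_ne_zero (mul_ne_zero hm0 hm10); nlinarith
  have hD3 : (m : ℚ) * ((m : ℚ) + 1) * (((k : ℚ) + 1) * m + (i : ℚ)) ≠ 0 := by
    apply mul_ne_zero (mul_ne_zero hm0 hm10); nlinarith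
  have key2 : (1 + (i : ℚ)) * Z * ((m : ℚ) * ((m : ℚ) + 1) * (((k : ℚ) + 1) * m + i))
      = ((m : ℚ) * ((i : ℚ) + 1) ^ 2 + ((m : ℚ) * (((k : ℚ) + 1) * m + 1) - ((k : ℚ) + 1) * m)
            * ((i : ℚ) + 1) - ((k : ℚ) + 1) * m * (((k : ℚ) + 1) * m - m)) * Z
            * (((k : ℚ) + 1) * m + i)
        - ((m : ℚ) * (i : ℚ) ^ 2 + ((m : ℚ) * (((k : ℚ) + 1) * m + 1) - ((k : ℚ) + 1) * m)
            * (i : ℚ) - ((k : ℚ) + 1) * m * (((k : ℚ) + 1) * m - m)) * X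
            * (((k : ℚ) + 1) * m + i + 1) := by
    apply mul_right_cancel₀ hd
    linear_combination ((1 + (i : ℚ)) * ((m : ℚ) * ((m : ℚ) + 1)) * (((k : ℚ) + 1) * m + i)
      - ((m : ℚ) * ((i : ℚ) + 1) ^ 2 + ((m : ℚ) * (((k : ℚ) + 1) * m + 1) - ((k : ℚ) + 1) * m)
            * ((i : ℚ) + 1) - ((k : ℚ) + 1) * m * (((k : ℚ) + 1) * m - m))
        * (((k : ℚ) + 1) * m + i)) * hCs
  rw [div_mul_eq_mul_div, div_mul_eq_mul_div, div_mul_eq_mul_div,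
    div_sub_div _ _ hD2 hD3, div_eq_div_iff hq1 (mul_ne_zero hD2 hD3)]
  linear_combination ((m : ℚ) * ((m : ℚ) + 1) * (((k : ℚ) + 1) * m + i + 1)) * key2

theorem hoppy_first_run_total (k : ℕ) (hk : 1 ≤ k)
    (ubar : PowerSeries ℚ)
    (h0 : PowerSeries.constantCoeff ubar = 1)
    (hker : 1 - ubar + PowerSeries.X * ubar ^ (k + 1) = 0)
    (m : ℕ) (hm : 1 ≤ m) :
    PowerSeries.coeff m (∑ h ∈ Finset.Icc 1 k, ubar ^ h) =
      (k / (m + 1) : ℚ) * (Nat.choose ((k + 1) * m) m : ℚ) := by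
  have hu : ubar = 1 + PowerSeries.X * ubar ^ (k + 1) := by linear_combination -hker
  have hm1 : (1 : ℚ) ≤ (m : ℚ) := by exact_mod_cast hm
  have hk0 : (0 : ℚ) ≤ (k : ℚ) := Nat.cast_nonneg k
  have hm0 : (m : ℚ) ≠ 0 := by nlinarith
  have hm10 : (m : ℚ) + 1 ≠ 0 := by nlinarith
  have hTk : Tq k m k = 0 := by
    unfold Tq
    have hz : ((m : ℚ) * (k : ℚ) ^ 2
        + ((m : ℚ) * ((((k + 1) * m : ℕ) : ℚ) + 1) - (((k + 1) * m : ℕ) : ℚ)) * (k : ℚ)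
        - (((k + 1) * m : ℕ) : ℚ) * ((((k + 1) * m : ℕ) : ℚ) - (m : ℚ))) = 0 := by
      push_cast; ring
    rw [hz, zero_div, zero_mul]
  have hT0 : Tq k m 0 = -((k : ℚ) / ((m : ℚ) + 1) * ((((k + 1) * m).choose m : ℕ) : ℚ)) := by
    unfold Tq
    have hNq : (((k + 1) * m : ℕ) : ℚ) = ((k : ℚ) + 1) * m := by push_cast; ring
    rw [hNq]
    simp only [Nat.cast_zero, Nat.add_zero, add_zero, mul_zero, zero_mul, zero_add, zero_sub,
      zero_pow, ne_eq, OfNat.ofNat_ne_zero, not_false_eq_true]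
    have hq0 : ((k : ℚ) + 1) * m ≠ 0 := by nlinarith
    field_simp
    ring
  calc PowerSeries.coeff m (∑ h ∈ Finset.Icc 1 k, ubar ^ h)
      = ∑ h ∈ Finset.Icc 1 k, PowerSeries.coeff m (ubar ^ h) := map_sum _ _ _
    _ = ∑ h ∈ Finset.Icc 1 k,
          ((h : ℚ) / (((k + 1) * m + h : ℕ) : ℚ)) * ((((k + 1) * m + h).choose m : ℕ) : ℚ) :=
        Finset.sum_congr rfl (fun h hh => coeff_ubar_pow k ubar hu m h (Finset.mem_Icc.mp hh).1)
    _ = ∑ i ∈ Finset.range k,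
          (((1 + i : ℕ) : ℚ) / (((k + 1) * m + (1 + i) : ℕ) : ℚ))
            * ((((k + 1) * m + (1 + i)).choose m : ℕ) : ℚ) := by
        rw [← Finset.Ico_add_one_right_eq_Icc, Finset.sum_Ico_eq_sum_range, Nat.add_sub_cancel]
    _ = ∑ i ∈ Finset.range k, (Tq k m (i + 1) - Tq k m i) :=
        Finset.sum_congr rfl (fun i _ => keyC k m i hm)
    _ = Tq k m k - Tq k m 0 := Finset.sum_range_sub (Tq k m) k
    _ = (k / (m + 1) : ℚ) * (Nat.choose ((k + 1) * m) m : ℚ) := by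
        rw [hTk, hT0]; push_cast; ring
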